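/- Let G be a finite connected graph with edge set L and let Ω be the set of 0-1 incidence vectors of spanning trees of G. Then the projection onto the α-coordinates of the set { (α, β) : β ∈ conv(Ω), 0 ≤ α ≤ β } equals the convex hull of incidence vectors of spanning forests of G. -/

import Mathlib

open scoped Classical

/-- Incidence vector of a graph's edge set, as a function on the edges of G. -/
noncomputable def incVec {V : Type*} (G H : SimpleGraph V) : G.edgeSet → ℝ :=
  fun e => if (e : Sym2 V) ∈ H.edgeSet then 1 else 0

lemma incVec_nonneg {V : Type*} (G H : SimpleGraph V) (e : G.edgeSet) :
    0 ≤ incVec G H e := by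
  unfold incVec; split <;> norm_num

lemma incVec_mono {V : Type*} (G : SimpleGraph V) {F T : SimpleGraph V} (h : F ≤ T)
    (e : G.edgeSet) : incVec G F e ≤ incVec G T e := by
  unfold incVec
  by_cases hF : (e : Sym2 V) ∈ F.edgeSet
  · rw [if_pos hF, if_pos (SimpleGraph.edgeSet_mono h hF)]
  · rw [if_neg hF]; split <;> norm_num

/-- Subgraphs of acyclic graphs are acyclic. -/
lemma isAcyclic_mono {V : Type*} {F T : SimpleGraph V} (h : F ≤ T) (hT : T.IsAcyclic) :
    F.IsAcyclic :=
  fun _ c hc => hT (c.mapLe h) (hc.mapLe h)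

/-- Adding an edge between two vertices not connected by a path keeps the graph acyclic. -/
lemma isAcyclic_sup_edge {V : Type*} {H : SimpleGraph V} (hH : H.IsAcyclic) {u v : V}
    (huv : ¬ H.Reachable u v) : (H ⊔ SimpleGraph.edge u v).IsAcyclic := by
  have hne : u ≠ v := fun h => huv (h ▸ SimpleGraph.Reachable.refl u)
  intro a c hc
  by_cases he : s(u, v) ∈ c.edges
  · have hreach :=
      ((SimpleGraph.adj_and_reachable_delete_edges_iff_exists_cycle
        (G := H ⊔ SimpleGraph.edge u v)).2 ⟨a, c, hc, he⟩).2
    have hle : (H ⊔ SimpleGraph.edge u v) \ SimpleGraph.fromEdgeSet {s(u, v)} ≤ H := by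
      intro x y hxy
      rcases hxy with ⟨hxy1, hxy2⟩
      rcases hxy1 with hxy1 | hxy1
      · exact hxy1
      · exfalso
        apply hxy2
        rw [SimpleGraph.edge_adj] at hxy1
        exact ⟨by rcases hxy1.1 with ⟨rfl, rfl⟩ | ⟨rfl, rfl⟩ <;> simp [Sym2.eq_swap], hxy1.2⟩
    exact huv (hreach.mono hle)
  · have hp : ∀ e ∈ c.edges, e ∈ H.edgeSet := by
      intro e hec
      have := c.edges_subset_edgeSet hec
      rw [SimpleGraph.edgeSet_sup, SimpleGraph.edge_edgeSet_of_ne hne] at this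
      rcases this with h1 | h1
      · exact h1
      · exact absurd (h1 ▸ hec) he
    exact hH (c.transfer H hp) (hc.transfer hp)

/-- Every forest in a connected graph extends to a spanning tree. -/
lemma exists_spanning_tree {V : Type*} [Fintype V] {G F : SimpleGraph V}
    (hG : G.Connected) (hFG : F ≤ G) (hFa : F.IsAcyclic) :
    ∃ T : SimpleGraph V, F ≤ T ∧ T ≤ G ∧ T.IsTree := by
  set S : Set (SimpleGraph V) := {H | F ≤ H ∧ H ≤ G ∧ H.IsAcyclic} with hS
  have hSfin : S.Finite := Set.toFinite S
  have hSne : S.Nonempty := ⟨F, le_refl F, hFG, hFa⟩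
  obtain ⟨H, hHS, hHmax⟩ := Set.Finite.exists_maximalFor
    (fun H => H.edgeSet.ncard) S hSfin hSne
  obtain ⟨hFH, hHG, hHa⟩ := hHS
  -- every edge of G connects vertices reachable in H
  have hadj : ∀ ⦃x y : V⦄, G.Adj x y → H.Reachable x y := by
    intro x y hxy
    by_contra hre
    have hne : x ≠ y := hxy.ne
    have hHadj : ¬ H.Adj x y := fun h => hre h.reachable
    have hacy : (H ⊔ SimpleGraph.edge x y).IsAcyclic := isAcyclic_sup_edge hHa hre
    have hmem : (H ⊔ SimpleGraph.edge x y) ∈ S := by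
      refine ⟨le_trans hFH le_sup_left, sup_le hHG ?_, hacy⟩
      intro a b hab
      rw [SimpleGraph.edge_adj] at hab
      rcases hab.1 with ⟨rfl, rfl⟩ | ⟨rfl, rfl⟩
      · exact hxy
      · exact hxy.symm
    have hcard : (H ⊔ SimpleGraph.edge x y).edgeSet.ncard = H.edgeSet.ncard + 1 := by
      rw [SimpleGraph.edgeSet_sup, SimpleGraph.edge_edgeSet_of_ne hne, Set.union_singleton,
        Set.ncard_insert_of_notMem (by simpa using hHadj) (Set.toFinite _)]
    have := hHmax hmem (by dsimp only; omega)
    dsimp only at this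
    omega
  haveI : Nonempty V := hG.nonempty
  have hreach : ∀ x y : V, H.Reachable x y := by
    intro x y
    obtain ⟨w⟩ := hG.preconnected x y
    induction w with
    | nil => exact SimpleGraph.Reachable.refl _
    | cons h _ ih => exact (hadj h).trans ih
  exact ⟨H, hFH, hHG, ⟨SimpleGraph.Connected.mk hreach, hHa⟩⟩

/-- Box lemma: any vector between 0 and the incidence vector of a forest lies in the
spanning forest polytope. -/
lemma mem_forest_hull {V : Type*} [Fintype V] {G T : SimpleGraph V} (hTG : T ≤ G) (hTa : T.IsAcyclic)
    (γ : G.edgeSet → ℝ) (hγ : ∀ e, 0 ≤ γ e ∧ γ e ≤ incVec G T e) :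
    γ ∈ convexHull ℝ {α | ∃ F : SimpleGraph V, F ≤ G ∧ F.IsAcyclic ∧ α = incVec G F} := by
  have h1 : γ ∈ convexHull ℝ (Set.univ.pi fun e : G.edgeSet => ({0, incVec G T e} : Set ℝ)) := by
    apply mem_convexHull_pi
    intro e _
    rw [convexHull_pair, segment_eq_Icc (incVec_nonneg G T e)]
    exact ⟨(hγ e).1, (hγ e).2⟩
  refine convexHull_mono ?_ h1
  rintro x hx
  have hx' : ∀ e : G.edgeSet, x e = 0 ∨ x e = incVec G T e := by
    intro e
    simpa using hx e (Set.mem_univ e)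
  set Es : Set (Sym2 V) := {s | ∃ h : s ∈ G.edgeSet, x ⟨s, h⟩ = 1} with hEs
  have hEsG : Es ⊆ G.edgeSet := fun s hs => hs.1
  have hEsT : Es ⊆ T.edgeSet := by
    rintro s ⟨hsG, hs1⟩
    rcases hx' ⟨s, hsG⟩ with h | h
    · rw [hs1] at h; norm_num at h
    · rw [hs1] at h
      unfold incVec at h
      by_contra hT
      rw [if_neg hT] at h
      norm_num at h
  refine ⟨SimpleGraph.fromEdgeSet Es, ?_, ?_, ?_⟩
  · exact le_trans (SimpleGraph.fromEdgeSet_mono hEsG) (le_of_eq (SimpleGraph.fromEdgeSet_edgeSet G))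
  · exact isAcyclic_mono
      (le_trans (SimpleGraph.fromEdgeSet_mono hEsT) (le_of_eq (SimpleGraph.fromEdgeSet_edgeSet T)))
      hTa
  · funext e
    have hmem : (e : Sym2 V) ∈ (SimpleGraph.fromEdgeSet Es).edgeSet ↔ x e = 1 := by
      rw [SimpleGraph.edgeSet_fromEdgeSet]
      constructor
      · rintro ⟨⟨h1, h2⟩, _⟩
        convert h2 using 2
      · intro h
        exact ⟨⟨e.2, by convert h using 2⟩, G.not_isDiag_of_mem_edgeSet e.2⟩
    unfold incVec
    by_cases h : x e = 1
    · rw [if_pos (hmem.2 h), h]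
    · rw [if_neg (fun hc => h (hmem.1 hc))]
      rcases hx' e with h0 | h0
      · exact h0
      · unfold incVec at h0
        split at h0
        · exact absurd h0 h
        · exact h0

/-- The projection onto the α-coordinates of
{(α,β) : β ∈ conv(Ω), 0 ≤ α ≤ β} equals the spanning forest polytope. -/
theorem projection_eq_spanning_forest_polytope {V : Type*} [Fintype V]
    (G : SimpleGraph V) (hG : G.Connected) :
    {α : G.edgeSet → ℝ |
        ∃ β ∈ convexHull ℝ
          {β | ∃ T : SimpleGraph V, T ≤ G ∧ T.IsTree ∧ β = incVec G T},
        ∀ e : G.edgeSet, 0 ≤ α e ∧ α e ≤ β e}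
      = convexHull ℝ
          {α | ∃ F : SimpleGraph V, F ≤ G ∧ F.IsAcyclic ∧ α = incVec G F} := by
  ext α
  simp only [Set.mem_setOf_eq]
  constructor
  · rintro ⟨β, hβ, hle⟩
    rw [convexHull_eq] at hβ
    obtain ⟨ι, t, w, z, hw0, hw1, hz, hcm⟩ := hβ
    rw [Finset.centerMass_eq_of_sum_1 _ _ hw1] at hcm
    have hβe : ∀ e : G.edgeSet, β e = ∑ i ∈ t, w i * z i e := by
      intro e
      rw [← hcm]
      simp [Finset.sum_apply]
    have hznn : ∀ i ∈ t, ∀ e : G.edgeSet, 0 ≤ z i e := by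
      intro i hi e
      obtain ⟨T, _, _, hzi⟩ := hz i hi
      rw [hzi]
      exact incVec_nonneg G T e
    have hβnn : ∀ e : G.edgeSet, 0 ≤ β e := by
      intro e
      rw [hβe e]
      exact Finset.sum_nonneg fun i hi => mul_nonneg (hw0 i hi) (hznn i hi e)
    set αi : ι → (G.edgeSet → ℝ) :=
      fun i e => if β e = 0 then 0 else (α e / β e) * z i e with hαi
    have hmemi : ∀ i ∈ t, αi i ∈ convexHull ℝ
        {α | ∃ F : SimpleGraph V, F ≤ G ∧ F.IsAcyclic ∧ α = incVec G F} := by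
      intro i hi
      obtain ⟨T, hTG, hTtree, hzi⟩ := hz i hi
      apply mem_forest_hull hTG hTtree.IsAcyclic
      intro e
      have hratio : 0 ≤ α e / β e ∧ α e / β e ≤ 1 := by
        constructor
        · exact div_nonneg (hle e).1 (hβnn e)
        · rcases eq_or_lt_of_le (hβnn e) with h0 | h0
          · simp [← h0]
          · rw [div_le_one h0]; exact (hle e).2
      constructor
      · simp only [hαi]
        split
        · rfl
        · exact mul_nonneg hratio.1 (hznn i hi e)
      · simp only [hαi]
        split
        · exact incVec_nonneg G T e
        · rw [hzi]
          exact mul_le_of_le_one_left (incVec_nonneg G T e) hratio.2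
    have hαsum : α = ∑ i ∈ t, w i • αi i := by
      funext e
      rw [Finset.sum_apply]
      simp only [Pi.smul_apply, smul_eq_mul, hαi]
      by_cases h0 : β e = 0
      · simp only [h0, if_pos, if_true]
        have : α e = 0 := le_antisymm (h0 ▸ (hle e).2) (hle e).1
        simp [this]
      · simp only [h0, if_neg, if_false]
        have hsum : ∑ i ∈ t, w i * (α e / β e * z i e)
            = (α e / β e) * ∑ i ∈ t, w i * z i e := by
          rw [Finset.mul_sum]
          exact Finset.sum_congr rfl fun i _ => by ring
        rw [hsum, ← hβe e, div_mul_cancel₀ _ h0]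
    rw [hαsum]
    exact (convex_convexHull ℝ _).sum_mem hw0 hw1 hmemi
  · intro h
    set P : Set (G.edgeSet → ℝ) := {α : G.edgeSet → ℝ |
        ∃ β ∈ convexHull ℝ
          {β | ∃ T : SimpleGraph V, T ≤ G ∧ T.IsTree ∧ β = incVec G T},
        ∀ e : G.edgeSet, 0 ≤ α e ∧ α e ≤ β e} with hP
    have hsub : {α : G.edgeSet → ℝ |
        ∃ F : SimpleGraph V, F ≤ G ∧ F.IsAcyclic ∧ α = incVec G F} ⊆ P := by
      rintro _ ⟨F, hFG, hFa, rfl⟩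
      obtain ⟨T, hFT, hTG, hTtree⟩ := exists_spanning_tree hG hFG hFa
      refine ⟨incVec G T, subset_convexHull ℝ _ ⟨T, hTG, hTtree, rfl⟩, fun e => ?_⟩
      exact ⟨incVec_nonneg G F e, incVec_mono G hFT e⟩
    have hconv : Convex ℝ P := by
      rintro x ⟨βx, hβx, hx⟩ y ⟨βy, hβy, hy⟩ a b ha hb hab
      refine ⟨a • βx + b • βy, (convex_convexHull ℝ _) hβx hβy ha hb hab, fun e => ?_⟩
      simp only [Pi.add_apply, Pi.smul_apply, smul_eq_mul]
      constructor
      · exact add_nonneg (mul_nonneg ha (hx e).1) (mul_nonneg hb (hy e).1)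
      · exact add_le_add (mul_le_mul_of_nonneg_left (hx e).2 ha)
          (mul_le_mul_of_nonneg_left (hy e).2 hb)
    exact convexHull_min hsub hconv h
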